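/- Let T = T_{[w₁,w₂]} be the rooted planar binary tree obtained by grafting trees T₁ (for w₁, on leaf label set L₁) and T₂ (for w₂, on leaf label set L₂, with L₁ and L₂ disjoint) at a new root, with T₁ on the left. Let G be an oriented graph on L₁ ∪ L₂ with |L₁|+|L₂|−1 edges such that β_{G,T} is bijective. Then G has exactly one edge e connecting L₁ to L₂, the restrictions G₁, G₂ of G to L₁, L₂ satisfy bijectivity of β_{Gᵢ,Tᵢ}, and ⟨G,T⟩ = ε·⟨G₁,T₁⟩·⟨G₂,T₂⟩ where ε = +1 if e is oriented from L₁ to L₂ and ε = −1 otherwise. -/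

import Mathlib

/-- Rooted half-planar binary trees with leaves labeled in `α`. -/
inductive PTree (α : Type) : Type
  | leaf : α → PTree α
  | node : PTree α → PTree α → PTree α
deriving DecidableEq

namespace PTree

variable {α : Type} [DecidableEq α]

/-- The list of leaf labels, read left to right. -/
def leaves : PTree α → List α
  | leaf a => [a]
  | node l r => leaves l ++ leaves r

/-- The internal vertices of a tree, identified with the subtrees they root. -/
def subtrees : PTree α → List (PTree α)
  | leaf _ => []
  | node l r => node l r :: (subtrees l ++ subtrees r)

/-- `gcv T i j` is the lowest common ancestor (greatest common vertex) of
leaves `i` and `j`, as the subtree it roots; `none` if undefined. -/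
def gcv : PTree α → α → α → Option (PTree α)
  | leaf _, _, _ => none
  | node l r, i, j =>
    if i ∈ l.leaves ∧ j ∈ l.leaves then gcv l i j
    else if i ∈ r.leaves ∧ j ∈ r.leaves then gcv r i j
    else if i ∈ (node l r).leaves ∧ j ∈ (node l r).leaves ∧ i ≠ j then
      some (node l r)
    else none

/-- `isLeftOf T i j` : leaf `i` lies strictly to the left of leaf `j`. -/
def isLeftOf : PTree α → α → α → Bool
  | leaf _, _, _ => false
  | node l r, i, j =>
    decide (i ∈ l.leaves ∧ j ∈ r.leaves) || isLeftOf l i j || isLeftOf r i j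

/-- The sign of an oriented edge `(i → j)` relative to `T`. -/
def esgn (T : PTree α) (e : α × α) : ℤ := if T.isLeftOf e.1 e.2 then 1 else -1

/-- The configuration pairing `⟨G, T⟩` of an oriented graph `G` (a list of
oriented edges) with a tree `T`: the product of edge signs if
`β_{G,T} = gcv` is surjective onto internal vertices, else `0`. -/
def pairing (T : PTree α) (G : List (α × α)) : ℤ :=
  if ∀ t ∈ T.subtrees, ∃ e ∈ G, T.gcv e.1 e.2 = some t then
    (G.map T.esgn).prod
  else 0

end PTree

/-- The simple graph underlying a list of oriented edges. -/
def toSG {α : Type} (G : List (α × α)) : SimpleGraph α where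
  Adj v w := v ≠ w ∧ ((v, w) ∈ G ∨ (w, v) ∈ G)
  symm := ⟨fun v w h => ⟨h.1.symm, h.2.elim Or.inr Or.inl⟩⟩
  loopless := ⟨fun v h => h.1 rfl⟩

namespace PTree

variable {α : Type} [DecidableEq α]

lemma leaves_ne_nil (T : PTree α) : T.leaves ≠ [] := by
  induction T with
  | leaf a => simp [leaves]
  | node l r ihl ihr => simp [leaves, ihl]

lemma mem_leaves_of_mem_subtrees {T t : PTree α} (h : t ∈ T.subtrees) :
    ∀ a ∈ t.leaves, a ∈ T.leaves := by
  induction T with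
  | leaf a => simp [subtrees] at h
  | node l r ihl ihr =>
    simp only [subtrees, List.mem_cons, List.mem_append] at h
    rcases h with h | h | h
    · subst h; exact fun a ha => ha
    · intro a ha; simp only [leaves, List.mem_append]; exact Or.inl (ihl h a ha)
    · intro a ha; simp only [leaves, List.mem_append]; exact Or.inr (ihr h a ha)

lemma gcv_exists {T : PTree α} {i j : α} (hi : i ∈ T.leaves) (hj : j ∈ T.leaves)
    (hij : i ≠ j) : ∃ t ∈ T.subtrees, T.gcv i j = some t := by
  induction T with
  | leaf a =>
    simp only [leaves, List.mem_singleton] at hi hj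
    exact absurd (hi.trans hj.symm) hij
  | node l r ihl ihr =>
    by_cases h1 : i ∈ l.leaves ∧ j ∈ l.leaves
    · obtain ⟨t, ht, hg⟩ := ihl h1.1 h1.2
      exact ⟨t, by simp [subtrees, ht], by simp [gcv, h1, hg]⟩
    · by_cases h2 : i ∈ r.leaves ∧ j ∈ r.leaves
      · obtain ⟨t, ht, hg⟩ := ihr h2.1 h2.2
        exact ⟨t, by simp [subtrees, ht], by simp [gcv, h1, h2, hg]⟩
      · refine ⟨node l r, by simp [subtrees], ?_⟩
        simp [gcv, h1, h2, hij, hi, hj]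

lemma mem_subtrees_of_gcv {T t : PTree α} {i j : α} (h : T.gcv i j = some t) :
    t ∈ T.subtrees := by
  induction T with
  | leaf a => simp [gcv] at h
  | node l r ihl ihr =>
    simp only [gcv] at h
    split_ifs at h with h1 h2 h3
    · simp [subtrees, ihl h]
    · simp [subtrees, ihr h]
    · simp only [Option.some.injEq] at h; simp [subtrees, h.symm]

lemma isLeftOf_mem {T : PTree α} {i j : α} (h : T.isLeftOf i j = true) :
    i ∈ T.leaves ∧ j ∈ T.leaves := by
  induction T with
  | leaf a => simp [isLeftOf] at h
  | node l r ihl ihr =>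
    simp only [isLeftOf, Bool.or_eq_true, decide_eq_true_eq] at h
    simp only [leaves, List.mem_append]
    rcases h with (h | h) | h
    · exact ⟨Or.inl h.1, Or.inr h.2⟩
    · exact ⟨Or.inl (ihl h).1, Or.inl (ihl h).2⟩
    · exact ⟨Or.inr (ihr h).1, Or.inr (ihr h).2⟩

end PTree
lemma List.eq_singleton_of_nodup_of_forall {β : Type} {l : List β} {a : β} (hn : l.Nodup)
    (ha : a ∈ l) (h : ∀ x ∈ l, x = a) : l = [a] := by
  cases l with
  | nil => simp at ha
  | cons x xs =>
    have hx : x = a := h x List.mem_cons_self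
    subst hx
    cases xs with
    | nil => rfl
    | cons y ys =>
      have hy : y = x := h y (by simp)
      simp [List.nodup_cons, hy] at hn
/-- For `T = node T₁ T₂` (grafting, `T₁` on the left) with disjoint
leaf sets `L₁, L₂`, and `G` on `L₁ ∪ L₂` with `|L₁| + |L₂| - 1` edges such that
`β_{G,T}` is bijective: `G` has exactly one edge between `L₁` and `L₂`, the
restrictions `G₁, G₂` have bijective `β_{Gᵢ,Tᵢ}`, and
`⟨G,T⟩ = ε ⟨G₁,T₁⟩ ⟨G₂,T₂⟩` with `ε = +1` iff the edge points from `L₁` to `L₂`. -/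
theorem pairing_of_graft
    {α : Type} [DecidableEq α] (T₁ T₂ : PTree α)
    (h₁ : T₁.leaves.Nodup) (h₂ : T₂.leaves.Nodup)
    (hdisj : ∀ a ∈ T₁.leaves, a ∉ T₂.leaves)
    (G : List (α × α)) (hG : G.Nodup)
    (hcard : G.length = T₁.leaves.length + T₂.leaves.length - 1)
    (hends : ∀ e ∈ G, e.1 ∈ (PTree.node T₁ T₂).leaves ∧
      e.2 ∈ (PTree.node T₁ T₂).leaves ∧ e.1 ≠ e.2)
    -- β_{G,T} is a bijection
    (hinj : ∀ e ∈ G, ∀ f ∈ G,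
      (PTree.node T₁ T₂).gcv e.1 e.2 = (PTree.node T₁ T₂).gcv f.1 f.2 → e = f)
    (hsurj : ∀ t ∈ (PTree.node T₁ T₂).subtrees, ∃ e ∈ G,
      (PTree.node T₁ T₂).gcv e.1 e.2 = some t) :
    (∃! e, e ∈ G ∧ ((e.1 ∈ T₁.leaves ∧ e.2 ∈ T₂.leaves) ∨
        (e.1 ∈ T₂.leaves ∧ e.2 ∈ T₁.leaves))) ∧
    (∀ t ∈ T₁.subtrees, ∃ e ∈ G.filter
        (fun e => decide (e.1 ∈ T₁.leaves ∧ e.2 ∈ T₁.leaves)),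
      T₁.gcv e.1 e.2 = some t) ∧
    (∀ t ∈ T₂.subtrees, ∃ e ∈ G.filter
        (fun e => decide (e.1 ∈ T₂.leaves ∧ e.2 ∈ T₂.leaves)),
      T₂.gcv e.1 e.2 = some t) ∧
    (∀ e ∈ G.filter (fun e => decide (e.1 ∈ T₁.leaves ∧ e.2 ∈ T₁.leaves)),
      ∀ f ∈ G.filter (fun e => decide (e.1 ∈ T₁.leaves ∧ e.2 ∈ T₁.leaves)),
      T₁.gcv e.1 e.2 = T₁.gcv f.1 f.2 → e = f) ∧
    (∀ e ∈ G.filter (fun e => decide (e.1 ∈ T₂.leaves ∧ e.2 ∈ T₂.leaves)),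
      ∀ f ∈ G.filter (fun e => decide (e.1 ∈ T₂.leaves ∧ e.2 ∈ T₂.leaves)),
      T₂.gcv e.1 e.2 = T₂.gcv f.1 f.2 → e = f) ∧
    (∀ e ∈ G, ((e.1 ∈ T₁.leaves ∧ e.2 ∈ T₂.leaves) ∨
        (e.1 ∈ T₂.leaves ∧ e.2 ∈ T₁.leaves)) →
      (PTree.node T₁ T₂).pairing G =
        (if e.1 ∈ T₁.leaves then 1 else -1) *
        T₁.pairing (G.filter (fun e => decide (e.1 ∈ T₁.leaves ∧ e.2 ∈ T₁.leaves))) *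
        T₂.pairing (G.filter (fun e => decide (e.1 ∈ T₂.leaves ∧ e.2 ∈ T₂.leaves)))) := by
  classical
  have h21 : ∀ a ∈ T₂.leaves, a ∉ T₁.leaves := fun a h2 h1 => hdisj a h1 h2
  have sub1 : ∀ t ∈ T₁.subtrees, ∀ a ∈ t.leaves, a ∈ T₁.leaves :=
    fun t ht => PTree.mem_leaves_of_mem_subtrees ht
  have sub2 : ∀ t ∈ T₂.subtrees, ∀ a ∈ t.leaves, a ∈ T₂.leaves :=
    fun t ht => PTree.mem_leaves_of_mem_subtrees ht
  have no1 : ∀ t ∈ T₁.subtrees, t ≠ PTree.node T₁ T₂ := by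
    intro t ht h
    obtain ⟨a, ha⟩ := List.exists_mem_of_ne_nil _ (PTree.leaves_ne_nil T₂)
    have : a ∈ t.leaves := by rw [h]; simp [PTree.leaves, ha]
    exact h21 a ha (sub1 t ht a this)
  have no2 : ∀ t ∈ T₂.subtrees, t ≠ PTree.node T₁ T₂ := by
    intro t ht h
    obtain ⟨a, ha⟩ := List.exists_mem_of_ne_nil _ (PTree.leaves_ne_nil T₁)
    have : a ∈ t.leaves := by rw [h]; simp [PTree.leaves, ha]
    exact hdisj a ha (sub2 t ht a this)
  have nd12 : ∀ t ∈ T₁.subtrees, t ∉ T₂.subtrees := by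
    intro t ht ht'
    obtain ⟨a, ha⟩ := List.exists_mem_of_ne_nil _ (PTree.leaves_ne_nil t)
    exact hdisj a (sub1 t ht a ha) (sub2 t ht' a ha)
  have gL : ∀ i j : α, i ∈ T₁.leaves → j ∈ T₁.leaves →
      (PTree.node T₁ T₂).gcv i j = T₁.gcv i j := by
    intro i j hi hj; simp [PTree.gcv, hi, hj]
  have gR : ∀ i j : α, i ∈ T₂.leaves → j ∈ T₂.leaves →
      (PTree.node T₁ T₂).gcv i j = T₂.gcv i j := by
    intro i j hi hj; simp [PTree.gcv, hi, hj, h21 i hi]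
  have gM : ∀ i j : α,
      (i ∈ T₁.leaves ∧ j ∈ T₂.leaves) ∨ (i ∈ T₂.leaves ∧ j ∈ T₁.leaves) →
      (PTree.node T₁ T₂).gcv i j = some (PTree.node T₁ T₂) := by
    intro i j h
    rcases h with ⟨hi, hj⟩ | ⟨hi, hj⟩
    · have hij : i ≠ j := fun h => hdisj i hi (h ▸ hj)
      simp [PTree.gcv, PTree.leaves, hi, hj, hdisj i hi, h21 j hj, hij]
    · have hij : i ≠ j := fun h => hdisj j hj (h ▸ hi)
      simp [PTree.gcv, PTree.leaves, hi, hj, hdisj j hj, h21 i hi, hij]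
  have cls : ∀ e ∈ G,
      (e.1 ∈ T₁.leaves ∧ e.2 ∈ T₁.leaves) ∨ (e.1 ∈ T₂.leaves ∧ e.2 ∈ T₂.leaves) ∨
      ((e.1 ∈ T₁.leaves ∧ e.2 ∈ T₂.leaves) ∨ (e.1 ∈ T₂.leaves ∧ e.2 ∈ T₁.leaves)) := by
    intro e he
    obtain ⟨h1, h2, _⟩ := hends e he
    simp only [PTree.leaves, List.mem_append] at h1 h2
    rcases h1 with h1 | h1 <;> rcases h2 with h2 | h2 <;> tauto
  -- the unique mixed edge
  obtain ⟨e₀, he₀G, he₀⟩ := hsurj (PTree.node T₁ T₂) (by simp [PTree.subtrees])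
  have me₀ : (e₀.1 ∈ T₁.leaves ∧ e₀.2 ∈ T₂.leaves) ∨
      (e₀.1 ∈ T₂.leaves ∧ e₀.2 ∈ T₁.leaves) := by
    rcases cls e₀ he₀G with h | h | h
    · rw [gL _ _ h.1 h.2] at he₀
      exact absurd rfl (no1 _ (PTree.mem_subtrees_of_gcv he₀))
    · rw [gR _ _ h.1 h.2] at he₀
      exact absurd rfl (no2 _ (PTree.mem_subtrees_of_gcv he₀))
    · exact h
  have uniq : ∀ f ∈ G, ((f.1 ∈ T₁.leaves ∧ f.2 ∈ T₂.leaves) ∨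
      (f.1 ∈ T₂.leaves ∧ f.2 ∈ T₁.leaves)) → f = e₀ := by
    intro f hf mf
    exact hinj f hf e₀ he₀G (by rw [gM _ _ mf, gM _ _ me₀])
  have surj₁ : ∀ t ∈ T₁.subtrees, ∃ e ∈ G.filter
      (fun e => decide (e.1 ∈ T₁.leaves ∧ e.2 ∈ T₁.leaves)), T₁.gcv e.1 e.2 = some t := by
    intro t ht
    obtain ⟨e, heG, he⟩ := hsurj t (by simp [PTree.subtrees, ht])
    rcases cls e heG with h | h | h
    · exact ⟨e, List.mem_filter.2 ⟨heG, by simp [h.1, h.2]⟩,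
        by rw [← gL _ _ h.1 h.2]; exact he⟩
    · rw [gR _ _ h.1 h.2] at he
      exact absurd (PTree.mem_subtrees_of_gcv he) (nd12 t ht)
    · rw [gM _ _ h] at he
      exact absurd (Option.some.inj he).symm (no1 t ht)
  have surj₂ : ∀ t ∈ T₂.subtrees, ∃ e ∈ G.filter
      (fun e => decide (e.1 ∈ T₂.leaves ∧ e.2 ∈ T₂.leaves)), T₂.gcv e.1 e.2 = some t := by
    intro t ht
    obtain ⟨e, heG, he⟩ := hsurj t (by simp [PTree.subtrees, ht])
    rcases cls e heG with h | h | h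
    · rw [gL _ _ h.1 h.2] at he
      exact absurd (PTree.mem_subtrees_of_gcv he) (fun h' => nd12 t h' ht)
    · exact ⟨e, List.mem_filter.2 ⟨heG, by simp [h.1, h.2]⟩,
        by rw [← gR _ _ h.1 h.2]; exact he⟩
    · rw [gM _ _ h] at he
      exact absurd (Option.some.inj he).symm (no2 t ht)
  have inj₁ : ∀ e ∈ G.filter (fun e => decide (e.1 ∈ T₁.leaves ∧ e.2 ∈ T₁.leaves)),
      ∀ f ∈ G.filter (fun e => decide (e.1 ∈ T₁.leaves ∧ e.2 ∈ T₁.leaves)),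
      T₁.gcv e.1 e.2 = T₁.gcv f.1 f.2 → e = f := by
    intro e he f hf h
    rw [List.mem_filter] at he hf
    simp only [decide_eq_true_eq] at he hf
    exact hinj e he.1 f hf.1 (by rw [gL _ _ he.2.1 he.2.2, gL _ _ hf.2.1 hf.2.2]; exact h)
  have inj₂ : ∀ e ∈ G.filter (fun e => decide (e.1 ∈ T₂.leaves ∧ e.2 ∈ T₂.leaves)),
      ∀ f ∈ G.filter (fun e => decide (e.1 ∈ T₂.leaves ∧ e.2 ∈ T₂.leaves)),
      T₂.gcv e.1 e.2 = T₂.gcv f.1 f.2 → e = f := by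
    intro e he f hf h
    rw [List.mem_filter] at he hf
    simp only [decide_eq_true_eq] at he hf
    exact hinj e he.1 f hf.1 (by rw [gR _ _ he.2.1 he.2.2, gR _ _ hf.2.1 hf.2.2]; exact h)
  refine ⟨⟨e₀, ⟨he₀G, me₀⟩, fun f hf => uniq f hf.1 hf.2⟩, surj₁, surj₂, inj₁, inj₂, ?_⟩
  -- the pairing identity
  intro e heG hme
  have eL : ∀ x : α × α, x.1 ∈ T₁.leaves → x.2 ∈ T₁.leaves →
      (PTree.node T₁ T₂).esgn x = T₁.esgn x := by
    intro x h1 h2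
    have hr : T₂.isLeftOf x.1 x.2 = false := by
      by_contra h
      exact hdisj x.1 h1 (PTree.isLeftOf_mem (by simpa using h)).1
    simp [PTree.esgn, PTree.isLeftOf, hr, hdisj x.2 h2]
  have eR : ∀ x : α × α, x.1 ∈ T₂.leaves → x.2 ∈ T₂.leaves →
      (PTree.node T₁ T₂).esgn x = T₂.esgn x := by
    intro x h1 h2
    have hl : T₁.isLeftOf x.1 x.2 = false := by
      by_contra h
      exact h21 x.1 h1 (PTree.isLeftOf_mem (by simpa using h)).1
    simp [PTree.esgn, PTree.isLeftOf, hl, h21 x.1 h1]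
  have eM : (PTree.node T₁ T₂).esgn e = (if e.1 ∈ T₁.leaves then 1 else -1) := by
    rcases hme with ⟨h1, h2⟩ | ⟨h1, h2⟩
    · simp [PTree.esgn, PTree.isLeftOf, h1, h2]
    · have hl1 : T₁.isLeftOf e.1 e.2 = false := by
        by_contra h; exact h21 e.1 h1 (PTree.isLeftOf_mem (by simpa using h)).1
      have hl2 : T₂.isLeftOf e.1 e.2 = false := by
        by_contra h; exact hdisj e.2 h2 (PTree.isLeftOf_mem (by simpa using h)).2
      simp [PTree.esgn, PTree.isLeftOf, h21 e.1 h1, hl1, hl2]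
  rw [PTree.pairing, if_pos hsurj, PTree.pairing, if_pos surj₁, PTree.pairing, if_pos surj₂]
  set q₁ : α × α → Bool := fun e => decide (e.1 ∈ T₁.leaves ∧ e.2 ∈ T₁.leaves) with hq₁
  set q₂ : α × α → Bool := fun e => decide (e.1 ∈ T₂.leaves ∧ e.2 ∈ T₂.leaves) with hq₂
  set s := (PTree.node T₁ T₂).esgn with hs
  have A : (G.filter fun x => !q₁ x).filter q₂ = G.filter q₂ := by
    rw [List.filter_filter]
    apply List.filter_congr
    intro x hx
    by_cases h : x.1 ∈ T₂.leaves ∧ x.2 ∈ T₂.leaves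
    · simp [hq₁, hq₂, h, h21 x.1 h.1]
    · simp [hq₂, h]
  have B : (G.filter fun x => !q₁ x).filter (fun x => !q₂ x) = [e] := by
    apply List.eq_singleton_of_nodup_of_forall ((hG.filter _).filter _)
    · rw [List.mem_filter, List.mem_filter]
      refine ⟨⟨heG, ?_⟩, ?_⟩ <;>
        simp only [hq₁, hq₂, Bool.not_eq_true', decide_eq_false_iff_not] <;>
        rcases hme with ⟨h1, h2⟩ | ⟨h1, h2⟩
      · exact fun h' => hdisj e.2 h'.2 h2
      · exact fun h' => hdisj e.1 h'.1 h1
      · exact fun h' => hdisj e.1 h1 h'.1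
      · exact fun h' => hdisj e.2 h2 h'.2
    · intro x hx
      rw [List.mem_filter, List.mem_filter] at hx
      obtain ⟨⟨hxG, hx1⟩, hx2⟩ := hx
      simp only [hq₁, hq₂, Bool.not_eq_true', decide_eq_false_iff_not] at hx1 hx2
      rcases cls x hxG with h | h | h
      · exact absurd h hx1
      · exact absurd h hx2
      · rw [uniq x hxG h, uniq e heG hme]
  have key : (G.map s).prod =
      ((G.filter q₁).map s).prod * (((G.filter q₂).map s).prod * s e) := by
    rw [← ((List.filter_append_perm q₁ G).map s).prod_eq, List.map_append,
      List.prod_append, ← ((List.filter_append_perm q₂ (G.filter fun x => !q₁ x)).map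
        s).prod_eq, List.map_append, List.prod_append, A, B]
    simp
  have m1 : (G.filter q₁).map s = (G.filter q₁).map T₁.esgn := by
    apply List.map_congr_left
    intro x hx
    rw [List.mem_filter] at hx
    simp only [hq₁, decide_eq_true_eq] at hx
    exact eL x hx.2.1 hx.2.2
  have m2 : (G.filter q₂).map s = (G.filter q₂).map T₂.esgn := by
    apply List.map_congr_left
    intro x hx
    rw [List.mem_filter] at hx
    simp only [hq₂, decide_eq_true_eq] at hx
    exact eR x hx.2.1 hx.2.2
  rw [key, m1, m2, eM]
  ring
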